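/- arXiv:2010.04317 — 2 statements merged into one kernel-verified Lean document; each statement's English description precedes it below -/
import Mathlib

section
/- Let n and d be integers with 1 ≤ d < n and let Δ be a pure (d−1)-dimensional simplicial complex on [n]. Then Δ is an f-simplicial complex if and only if Δ^c is an f-simplicial complex. -/
open Finset

/-- `Δ`, given as the finset of its faces, is a simplicial complex on the vertex
set `Fin n`: a nonempty collection of subsets closed under taking subsets. -/
def IsComplex {n : ℕ} (Δ : Finset (Finset (Fin n))) : Prop :=
  Δ.Nonempty ∧ ∀ A ∈ Δ, ∀ B ⊆ A, B ∈ Δ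

/-- The facets (maximal faces) of `Δ`. -/
def facets {n : ℕ} (Δ : Finset (Finset (Fin n))) : Finset (Finset (Fin n)) :=
  Δ.filter fun F => ∀ G ∈ Δ, F ⊆ G → F = G

/-- The simplicial complex generated by a family `𝔉`: all subsets of members of `𝔉`. -/
def generated {n : ℕ} (𝔉 : Finset (Finset (Fin n))) : Finset (Finset (Fin n)) :=
  univ.filter fun A => ∃ F ∈ 𝔉, A ⊆ F

/-- The Newton complement dual `Δ^c`: the complex generated by the complements
of the facets of `Δ`. -/
def cdual {n : ℕ} (Δ : Finset (Finset (Fin n))) : Finset (Finset (Fin n)) :=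
  generated ((facets Δ).image fun F => Fᶜ)

/-- The nonface complex of `Δ`: all subsets of `[n]` containing no facet of `Δ`. -/
def nonfaceComplex {n : ℕ} (Δ : Finset (Finset (Fin n))) : Finset (Finset (Fin n)) :=
  univ.filter fun A => ∀ F ∈ facets Δ, ¬ F ⊆ A

/-- `Δ` is an `f`-simplicial complex: for every `k`, `Δ` and its nonface complex
have the same number of `k`-element members (the same `f`-vector). -/
def IsFComplex {n : ℕ} (Δ : Finset (Finset (Fin n))) : Prop :=
  ∀ k : ℕ, (Δ.filter fun A => A.card = k).card =
    ((nonfaceComplex Δ).filter fun A => A.card = k).card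

/-- `Δ` is pure `(d-1)`-dimensional: every facet has exactly `d` elements. -/
def PureDim {n : ℕ} (d : ℕ) (Δ : Finset (Finset (Fin n))) : Prop :=
  ∀ F ∈ facets Δ, F.card = d

/-- The minimal nonfaces of `Δ`: sets that are not faces but all of whose proper
subsets are faces. -/
def minNonfaces {n : ℕ} (Δ : Finset (Finset (Fin n))) : Finset (Finset (Fin n)) :=
  univ.filter fun A => A ∉ Δ ∧ ∀ B ⊂ A, B ∈ Δ

/-- The Alexander dual `Δ^∨`: the complex whose facets are the complements of the
minimal nonfaces of `Δ`. -/
def adual {n : ℕ} (Δ : Finset (Finset (Fin n))) : Finset (Finset (Fin n)) :=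
  generated ((minNonfaces Δ).image fun F => Fᶜ)

/-- The homogeneous complement `Δ'` (in degree `e`): the complex generated by the
`e`-element subsets of `[n]` that are not facets of `Δ`. -/
def hcompl {n : ℕ} (e : ℕ) (Δ : Finset (Finset (Fin n))) : Finset (Finset (Fin n)) :=
  generated (univ.filter fun A : Finset (Fin n) => A.card = e ∧ A ∉ facets Δ)

lemma mem_generated' {n : ℕ} {𝔉 : Finset (Finset (Fin n))} {B : Finset (Fin n)} :
    B ∈ generated 𝔉 ↔ ∃ F ∈ 𝔉, B ⊆ F := by
  simp [generated]

lemma mem_facets' {n : ℕ} {Δ : Finset (Finset (Fin n))} {F : Finset (Fin n)} :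
    F ∈ facets Δ ↔ F ∈ Δ ∧ ∀ G ∈ Δ, F ⊆ G → F = G := by
  simp [facets]

lemma mem_cdual {n : ℕ} {Δ : Finset (Finset (Fin n))} {B : Finset (Fin n)} :
    B ∈ cdual Δ ↔ ∃ F ∈ facets Δ, B ⊆ Fᶜ := by
  rw [cdual, mem_generated']
  constructor
  · rintro ⟨G, hG, hBG⟩
    obtain ⟨F, hF, rfl⟩ := mem_image.mp hG
    exact ⟨F, hF, hBG⟩
  · rintro ⟨F, hF, hBF⟩
    exact ⟨Fᶜ, mem_image.mpr ⟨F, hF, rfl⟩, hBF⟩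

lemma exists_facet {n : ℕ} {Δ : Finset (Finset (Fin n))} {A : Finset (Fin n)}
    (hA : A ∈ Δ) : ∃ F ∈ facets Δ, A ⊆ F := by
  obtain ⟨G, hG, hmax⟩ := (Δ.filter fun G => A ⊆ G).exists_max_image
    (fun G => G.card) ⟨A, by simp [hA]⟩
  simp only [mem_filter] at hG
  refine ⟨G, mem_facets'.mpr ⟨hG.1, fun H hH hGH => ?_⟩, hG.2⟩
  have : H ∈ Δ.filter fun G => A ⊆ G := by simp [hH, hG.2.trans hGH]
  exact Finset.eq_of_subset_of_card_le hGH (hmax H this)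

lemma facets_cdual {n d : ℕ} {Δ : Finset (Finset (Fin n))} (hpure : PureDim d Δ) :
    facets (cdual Δ) = (facets Δ).image fun F => Fᶜ := by
  ext G
  constructor
  · intro hG
    rw [mem_facets'] at hG
    obtain ⟨F, hF, hGF⟩ := mem_cdual.mp hG.1
    exact mem_image.mpr ⟨F, hF, (hG.2 Fᶜ (mem_cdual.mpr ⟨F, hF, subset_rfl⟩) hGF).symm⟩
  · intro hG
    obtain ⟨F, hF, rfl⟩ := mem_image.mp hG
    rw [mem_facets']
    refine ⟨mem_cdual.mpr ⟨F, hF, subset_rfl⟩, fun H hH hFH => ?_⟩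
    obtain ⟨F', hF', hHF'⟩ := mem_cdual.mp hH
    have hFF' : F' ⊆ F := compl_subset_compl.mp (hFH.trans hHF')
    have : F' = F := Finset.eq_of_subset_of_card_le hFF'
      (by rw [hpure F hF, hpure F' hF'])
    subst this
    exact subset_antisymm hFH hHF'

lemma generated_facets {n : ℕ} {Δ : Finset (Finset (Fin n))} (hΔ : IsComplex Δ) :
    generated (facets Δ) = Δ := by
  ext A
  rw [mem_generated']
  constructor
  · rintro ⟨F, hF, hAF⟩
    exact hΔ.2 F (mem_facets'.mp hF).1 A hAF
  · exact fun hA => exists_facet hA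

lemma cdual_cdual {n d : ℕ} {Δ : Finset (Finset (Fin n))} (hΔ : IsComplex Δ)
    (hpure : PureDim d Δ) : cdual (cdual Δ) = Δ := by
  rw [cdual, facets_cdual hpure, Finset.image_image]
  have h : ((fun F : Finset (Fin n) => Fᶜ) ∘ fun F => Fᶜ) = id := by
    funext F; simp
  rw [h, Finset.image_id]
  exact generated_facets hΔ

lemma nonface_count {n : ℕ} (Δ : Finset (Finset (Fin n))) {k : ℕ} (hk : k ≤ n) :
    ((nonfaceComplex Δ).filter fun A => A.card = k).card =
    ((univ.filter fun B : Finset (Fin n) => B ∉ cdual Δ).filter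
      fun B => B.card = n - k).card := by
  refine Finset.card_bij' (fun A _ => Aᶜ) (fun B _ => Bᶜ) ?_ ?_ ?_ ?_
  · intro A hA
    simp only [nonfaceComplex, mem_filter, mem_univ, true_and] at hA ⊢
    refine ⟨?_, ?_⟩
    · rw [mem_cdual]
      push_neg
      intro F hF
      rw [compl_subset_compl]
      exact hA.1 F hF
    · rw [Finset.card_compl, hA.2, Fintype.card_fin]
  · intro B hB
    simp only [nonfaceComplex, mem_filter, mem_univ, true_and] at hB ⊢
    refine ⟨fun F hF hFB => ?_, ?_⟩
    · exact hB.1 (mem_cdual.mpr ⟨F, hF, by rwa [Finset.subset_compl_comm] at hFB⟩)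
    · rw [Finset.card_compl, hB.2, Fintype.card_fin]
      omega
  · intro A _; exact compl_compl A
  · intro B _; exact compl_compl B

lemma card_filter_card {n : ℕ} (m : ℕ) :
    ((univ : Finset (Finset (Fin n))).filter fun B => B.card = m).card = n.choose m := by
  have : ((univ : Finset (Finset (Fin n))).filter fun B => B.card = m)
      = Finset.powersetCard m univ := by
    ext B; simp [Finset.mem_powersetCard_univ]
  rw [this, Finset.card_powersetCard, Finset.card_univ, Fintype.card_fin]

lemma key_count {n : ℕ} (Δ : Finset (Finset (Fin n))) {k : ℕ} (hk : k ≤ n) :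
    ((nonfaceComplex Δ).filter fun A => A.card = k).card +
    ((cdual Δ).filter fun B => B.card = n - k).card = n.choose k := by
  classical
  set s := (univ : Finset (Finset (Fin n))).filter fun B => B.card = n - k with hs
  have hsplit := Finset.card_filter_add_card_filter_not
    (s := s) (p := fun B => B ∈ cdual Δ)
  have e1 : s.filter (fun B => B ∈ cdual Δ) = (cdual Δ).filter fun B => B.card = n - k := by
    ext B; simp [hs]; tauto
  have e2 : s.filter (fun B => ¬ B ∈ cdual Δ) =
      (univ.filter fun B : Finset (Fin n) => B ∉ cdual Δ).filter fun B => B.card = n - k := by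
    ext B; simp [hs]; tauto
  have e3 : s.card = n.choose k := by
    rw [hs, card_filter_card]
    exact Nat.choose_symm hk
  rw [e1, e2, e3] at hsplit
  rw [nonface_count Δ hk]
  omega

lemma card_eq_zero_of_gt {n : ℕ} (S : Finset (Finset (Fin n))) {k : ℕ} (hk : n < k) :
    (S.filter fun A => A.card = k).card = 0 := by
  rw [Finset.card_eq_zero, Finset.filter_eq_empty_iff]
  intro A _
  have := A.card_le_univ
  simp only [Finset.card_univ, Fintype.card_fin] at this
  omega

lemma isF_iff {n : ℕ} (Δ : Finset (Finset (Fin n))) :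
    IsFComplex Δ ↔ ∀ k ≤ n, (Δ.filter fun A => A.card = k).card +
      ((cdual Δ).filter fun B => B.card = n - k).card = n.choose k := by
  constructor
  · intro h k hk
    rw [h k]
    exact key_count Δ hk
  · intro h k
    rcases le_or_gt k n with hk | hk
    · have := key_count Δ hk
      have := h k hk
      omega
    · rw [card_eq_zero_of_gt _ hk, card_eq_zero_of_gt _ hk]


/-- a pure `(d-1)`-dimensional simplicial complex `Δ` on `[n]` is an
`f`-simplicial complex iff its Newton complement dual `Δ^c` is. -/
theorem stmt1 {n d : ℕ} (hd : 1 ≤ d) (hdn : d < n)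
    (Δ : Finset (Finset (Fin n))) (hΔ : IsComplex Δ) (hpure : PureDim d Δ) :
    IsFComplex Δ ↔ IsFComplex (cdual Δ) := by
  rw [isF_iff, isF_iff, cdual_cdual hΔ hpure]
  constructor
  · intro h k hk
    have := h (n - k) (Nat.sub_le n k)
    rw [Nat.sub_sub_self hk, Nat.choose_symm hk] at this
    omega
  · intro h k hk
    have := h (n - k) (Nat.sub_le n k)
    rw [Nat.sub_sub_self hk, Nat.choose_symm hk] at this
    omega
end

section
/- Let 1 ≤ d < n and let Δ be a pure (d−1)-dimensional simplicial complex on [n] such that some d-element subset of [n] is not a facet of Δ (so that Δ' is defined) and such that F(Δ) is not all of [n]_d nor empty. Then (Δ^c)' = (Δ')^c, i.e., the homogeneous complement of the Newton complement dual of Δ equals the Newton complement dual of the homogeneous complement of Δ. -/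
open Finset

lemma facets_generated {n e : ℕ} (𝔉 : Finset (Finset (Fin n)))
    (hcard : ∀ F ∈ 𝔉, F.card = e) : facets (generated 𝔉) = 𝔉 := by
  ext A
  simp only [facets, generated, Finset.mem_filter, Finset.mem_univ, true_and]
  constructor
  · rintro ⟨⟨F, hF, hAF⟩, hmax⟩
    have : A = F := hmax F ⟨F, hF, subset_rfl⟩ hAF
    exact this ▸ hF
  · intro hA
    refine ⟨⟨A, hA, subset_rfl⟩, ?_⟩
    rintro G ⟨F, hF, hGF⟩ hAG
    have hAF : A = F := Finset.eq_of_subset_of_card_le (hAG.trans hGF)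
      (by rw [hcard A hA, hcard F hF])
    exact Finset.Subset.antisymm hAG (hAF ▸ hGF)

/-- for a pure `(d-1)`-dimensional complex `Δ` on `[n]` whose facet set is a
nonempty proper subfamily of the `d`-element subsets, `(Δ^c)' = (Δ')^c`. (Here `Δ^c` is
pure `(n-d-1)`-dimensional, so its homogeneous complement is taken in degree `n - d`.) -/
theorem stmt5 {n d : ℕ} (hd : 1 ≤ d) (hdn : d < n)
    (Δ : Finset (Finset (Fin n))) (hΔ : IsComplex Δ) (hpure : PureDim d Δ)
    (hne : (facets Δ).Nonempty)
    (hproper : ∃ A : Finset (Fin n), A.card = d ∧ A ∉ facets Δ) :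
    hcompl (n - d) (cdual Δ) = cdual (hcompl d Δ) := by
  have hdle : d ≤ n := hdn.le
  have h1 : facets (cdual Δ) = (facets Δ).image fun F => Fᶜ := by
    apply facets_generated (e := n - d)
    intro F hF
    simp only [Finset.mem_image] at hF
    obtain ⟨G, hG, rfl⟩ := hF
    rw [Finset.card_compl, hpure G hG, Fintype.card_fin]
  have h2 : facets (hcompl d Δ) =
      univ.filter fun A : Finset (Fin n) => A.card = d ∧ A ∉ facets Δ := by
    apply facets_generated (e := d)
    intro F hF
    simp only [Finset.mem_filter] at hF
    exact hF.2.1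
  rw [hcompl, h1, cdual, h2]
  congr 1
  ext A
  simp only [Finset.mem_filter, Finset.mem_univ, true_and, Finset.mem_image, not_exists]
  constructor
  · rintro ⟨hcardA, hA⟩
    refine ⟨Aᶜ, ⟨?_, ?_⟩, by simp⟩
    · rw [Finset.card_compl, hcardA, Fintype.card_fin]
      omega
    · intro h
      exact hA Aᶜ ⟨h, by simp⟩
  · rintro ⟨B, ⟨hBcard, hB⟩, rfl⟩
    constructor
    · rw [Finset.card_compl, hBcard, Fintype.card_fin]
    · rintro F ⟨hF, hFB⟩
      exact hB (compl_inj_iff.mp hFB ▸ hF)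
end
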